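/- Let λ ∈ ℝ, let x, x̃ : ℤ/Nℤ → ℝ, and define q : ℤ/Nℤ → ℝ by q_k = (e^{x̃_k−x_k}−1)(λ+e^{x_k−x̃_{k−1}}). Then the monodromy matrix T = L_{N−1}·L_{N−2}·⋯·L_1·L_0 satisfies T · (e^{x̃_{−1}}, 1)ᵀ = (∏_{k∈ℤ/Nℤ}(1+λe^{x̃_{k−1}−x_k})) · (e^{x̃_{−1}}, 1)ᵀ; in particular, ∏_{k∈ℤ/Nℤ}(1+λe^{x̃_{k−1}−x_k}) is an eigenvalue of T. -/

import Mathlib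

/-- Transition matrix of the zero curvature representation of the Bäcklund
transformation for the modified Toda lattice (with `q_k = e^{p_k}`). -/
noncomputable def modTodaL (N : ℕ) (lam : ℝ) (x q : ZMod N → ℝ) (i : ℕ) :
    Matrix (Fin 2) (Fin 2) ℝ :=
  !![lam + q (i : ZMod N), Real.exp (x (i : ZMod N));
     lam * Real.exp (-(x (i : ZMod N))), 1]

/-- Monodromy matrix `T = L_{N-1} ⬝ ⋯ ⬝ L_1 ⬝ L_0` for the modified Toda
lattice. -/
noncomputable def modTodaT (N : ℕ) (lam : ℝ) (x q : ZMod N → ℝ) :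
    Matrix (Fin 2) (Fin 2) ℝ :=
  ((List.range N).reverse.map (modTodaL N lam x q)).prod

lemma modTodaL_step (N : ℕ) (lam : ℝ) (x xt q : ZMod N → ℝ)
    (hq : ∀ k : ZMod N,
      q k = (Real.exp (xt k - x k) - 1) * (lam + Real.exp (x k - xt (k - 1)))) (n : ℕ) :
    (modTodaL N lam x q n).mulVec ![Real.exp (xt ((n : ZMod N) - 1)), 1] =
      (1 + lam * Real.exp (xt ((n : ZMod N) - 1) - x (n : ZMod N))) •
        ![Real.exp (xt (n : ZMod N)), 1] := by
  set k : ZMod N := (n : ZMod N)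
  funext i
  fin_cases i <;>
    simp [modTodaL, Matrix.mulVec, dotProduct, hq k, hq (n : ZMod N), Real.exp_sub, Real.exp_neg] <;>
    have h1 := Real.exp_pos (x k) <;> have h2 := Real.exp_pos (xt (k-1)) <;>
    field_simp <;> ring

lemma partial_step (N : ℕ) (lam : ℝ) (x xt q : ZMod N → ℝ)
    (hq : ∀ k : ZMod N,
      q k = (Real.exp (xt k - x k) - 1) * (lam + Real.exp (x k - xt (k - 1)))) (n : ℕ) :
    (((List.range n).reverse.map (modTodaL N lam x q)).prod).mulVec
        ![Real.exp (xt (-1)), 1] =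
      (∏ i ∈ Finset.range n, (1 + lam * Real.exp (xt ((i : ZMod N) - 1) - x (i : ZMod N)))) •
        ![Real.exp (xt ((n : ZMod N) - 1)), 1] := by
  induction n with
  | zero => simp
  | succ n ih =>
      rw [List.range_succ, List.reverse_append]
      simp only [List.reverse_singleton, List.singleton_append, List.map_cons, List.prod_cons]
      rw [← Matrix.mulVec_mulVec, ih, Matrix.mulVec_smul,
        modTodaL_step N lam x xt q hq n, Finset.prod_range_succ, smul_smul]
      have h : ((n + 1 : ℕ) : ZMod N) - 1 = (n : ZMod N) := by push_cast; ring
      rw [h]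

/-- For the periodic modified Toda lattice,
`∏ (1 + λ e^{x̃_{k−1} − x_k})` is an eigenvalue of the monodromy matrix, with
eigenvector `(e^{x̃_{−1}}, 1)ᵀ`. -/
theorem modToda_monodromy_eigenvalue
    (N : ℕ) [NeZero N] (lam : ℝ) (x xt q : ZMod N → ℝ)
    (hq : ∀ k : ZMod N,
      q k = (Real.exp (xt k - x k) - 1) * (lam + Real.exp (x k - xt (k - 1)))) :
    (modTodaT N lam x q).mulVec ![Real.exp (xt (-1)), 1] =
      (∏ k : ZMod N, (1 + lam * Real.exp (xt (k - 1) - x k))) • ![Real.exp (xt (-1)), 1] ∧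
    Module.End.HasEigenvalue (Matrix.toLin' (modTodaT N lam x q))
      (∏ k : ZMod N, (1 + lam * Real.exp (xt (k - 1) - x k))) := by

  have hprod : (∏ k : ZMod N, (1 + lam * Real.exp (xt (k - 1) - x k))) =
      ∏ i ∈ Finset.range N, (1 + lam * Real.exp (xt ((i : ZMod N) - 1) - x (i : ZMod N))) := by
    rw [Finset.prod_bij' (fun (k : ZMod N) _ => k.val) (fun i _ => (i : ZMod N))]
    · intro k _; exact Finset.mem_range.mpr (ZMod.val_lt k)
    · intro i hi; exact Finset.mem_univ _
    · intro k _; exact ZMod.natCast_rightInverse k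
    · intro i hi; exact ZMod.val_natCast_of_lt (Finset.mem_range.mp hi)
    · intro k _; rw [ZMod.natCast_rightInverse _]
  have h1 : (modTodaT N lam x q).mulVec ![Real.exp (xt (-1)), 1] =
      (∏ k : ZMod N, (1 + lam * Real.exp (xt (k - 1) - x k))) • ![Real.exp (xt (-1)), 1] := by
    rw [modTodaT, partial_step N lam x xt q hq N, hprod]
    congr 2
    simp [ZMod.natCast_self]
  refine ⟨h1, ?_⟩
  apply Module.End.hasEigenvalue_of_hasEigenvector (x := ![Real.exp (xt (-1)), 1])
  constructor
  · rw [Module.End.mem_eigenspace_iff, Matrix.toLin'_apply, h1]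
  · intro h
    have := congrFun h 1
    simp at this
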